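/- The class PCO(L) of probabilistic controllable and observable superlanguages of L is closed under binary intersection: if L, R1, R2 and M are probabilistic languages over Σ with R1 ∈ PCO(L) and R2 ∈ PCO(L), then R1 ∩ R2 ∈ PCO(L); in particular L ⊆ R1 ∩ R2 ⊆ M and R1 ∩ R2 is probabilistic controllable w.r.t. M and Σc and probabilistic observable w.r.t. M, Σc and Σo. -/

import Mathlib

open scoped BigOperators

noncomputable section

/-- Chain product: given step weights `w s σ` (interpreted as the conditional
probability of event `σ` after string `s`), `chainProd w pre rest` multiplies the
weights along `rest`, starting from the already-consumed prefix `pre`. -/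
def chainProd {E : Type*} (w : List E → E → ℝ) : List E → List E → ℝ
  | _, [] => 1
  | pre, σ :: rest => w pre σ * chainProd w (pre ++ [σ]) rest

/-- The (probabilistic) language generated by step weights `w`:
`langOf w [] = 1` and `langOf w (s ++ [σ]) = langOf w s * w s σ`. -/
def langOf {E : Type*} (w : List E → E → ℝ) : List E → ℝ := chainProd w []

/-- A probabilistic language over a finite event set `E`. -/
structure PLang (E : Type*) [Fintype E] where
  toFun : List E → ℝ
  nonneg : ∀ s, 0 ≤ toFun s
  le_one : ∀ s, toFun s ≤ 1
  eps : toFun [] = 1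
  step : ∀ s, (∑ σ : E, toFun (s ++ [σ])) ≤ toFun s

/-- `L1` is a probabilistic sublanguage of `L2`. -/
def PSub {E : Type*} (L1 L2 : List E → ℝ) : Prop :=
  (∀ s, 0 < L1 s → 0 < L2 s) ∧
  ∀ s, 0 < L1 s → ∀ σ : E, L1 (s ++ [σ]) / L1 s ≤ L2 (s ++ [σ]) / L2 s

/-- Intersection of probabilistic languages. -/
def pInter {E : Type*} (L1 L2 : List E → ℝ) : List E → ℝ :=
  langOf fun s σ => min (L1 (s ++ [σ]) / L1 s) (L2 (s ++ [σ]) / L2 s)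

/-- Natural projection erasing the events outside the observable set `So`. -/
def proj {E : Type*} [DecidableEq E] (So : Finset E) (s : List E) : List E :=
  s.filter fun σ => decide (σ ∈ So)

/-- A probabilistic discrete event system (probabilistic automaton). -/
structure PDES (X : Type*) (E : Type*) [Fintype E] where
  x0 : X
  trans : X → E → Option X
  prob : X → E → ℝ
  prob_nonneg : ∀ x σ, 0 ≤ prob x σ
  prob_le_one : ∀ x σ, prob x σ ≤ 1
  prob_pos_iff : ∀ x σ, 0 < prob x σ ↔ (trans x σ).isSome
  sum_le_one : ∀ x, (∑ σ : E, prob x σ) ≤ 1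

/-- Extension of the partial transition function to strings. -/
def PDES.transStar {X E : Type*} [Fintype E] (G : PDES X E) (s : List E) : Option X :=
  s.foldl (fun ox σ => ox.bind fun x => G.trans x σ) (some G.x0)

/-- Step weight of a PDES: `ρ(δ(x0,s),σ)` when `δ(x0,s)` is defined, `0` otherwise. -/
def PDES.w {X E : Type*} [Fintype E] (G : PDES X E) (s : List E) (σ : E) : ℝ :=
  (G.transStar s).elim 0 fun x => G.prob x σ

/-- The probabilistic language generated by a PDES. -/
def PDES.lang {X E : Type*} [Fintype E] (G : PDES X E) : List E → ℝ := langOf G.w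

/-- The set of control patterns: subsets of events containing every uncontrollable event. -/
def ControlPatterns {E : Type*} [Fintype E] [DecidableEq E] (Sc : Finset E) :
    Finset (Finset E) :=
  Finset.univ.filter fun θ => Scᶜ ⊆ θ

/-- `Sp` is a probabilistic P-supervisor for `G`: to every observation of a string in the
support of `L_G` it assigns a probability distribution on the control patterns. -/
def IsSupervisor {X E : Type*} [Fintype E] [DecidableEq E] (G : PDES X E)
    (Sc So : Finset E) (Sp : List E → Finset E → ℝ) : Prop :=
  ∀ s : List E, 0 < G.lang s →
    (∀ θ ∈ ControlPatterns Sc, 0 ≤ Sp (proj So s) θ) ∧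
    (∑ θ ∈ ControlPatterns Sc, Sp (proj So s) θ) = 1

/-- The controlled probabilistic language `L_{Sp/G}`. -/
def supLang {X E : Type*} [Fintype E] [DecidableEq E] (G : PDES X E)
    (Sc So : Finset E) (Sp : List E → Finset E → ℝ) : List E → ℝ :=
  langOf fun s σ =>
    G.w s σ * ∑ θ ∈ (ControlPatterns Sc).filter (fun θ => σ ∈ θ), Sp (proj So s) θ

/-- `K` is a scaling-factor function for `G`: on every observation of a string in the
support of `L_G` it takes values in `[0,1]` and equals `1` on uncontrollable events. -/
def IsScaling {X E : Type*} [Fintype E] [DecidableEq E] (G : PDES X E)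
    (Sc So : Finset E) (K : List E → E → ℝ) : Prop :=
  ∀ s : List E, 0 < G.lang s → ∀ σ : E,
    0 ≤ K (proj So s) σ ∧ K (proj So s) σ ≤ 1 ∧ (σ ∉ Sc → K (proj So s) σ = 1)

/-- The controlled probabilistic language `L_{K/G}`. -/
def kLang {X E : Type*} [Fintype E] [DecidableEq E] (G : PDES X E)
    (So : Finset E) (K : List E → E → ℝ) : List E → ℝ :=
  langOf fun s σ => G.w s σ * K (proj So s) σ

/-- Probabilistic controllability (language form). -/
def ProbControllable {E : Type*} (L M : List E → ℝ) (Sc : Finset E) : Prop :=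
  ∀ s : List E, 0 < L s → ∀ σ : E, σ ∉ Sc →
    L (s ++ [σ]) / L s = M (s ++ [σ]) / M s

/-- Probabilistic observability (language form). -/
def ProbObservable {E : Type*} [DecidableEq E] (L M : List E → ℝ)
    (Sc So : Finset E) : Prop :=
  ∀ s1 s2 : List E, 0 < L s1 → 0 < L s2 → proj So s1 = proj So s2 →
    ∀ σ ∈ Sc,
      (M (s1 ++ [σ]) / M s1) * (L (s2 ++ [σ]) / L s2) =
      (M (s2 ++ [σ]) / M s2) * (L (s1 ++ [σ]) / L s1)

/-- Probabilistic controllability (automata form). -/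
def AutControllable {X Q E : Type*} [Fintype E] (G : PDES X E) (H : PDES Q E)
    (Sc : Finset E) : Prop :=
  ∀ s : List E, 0 < H.lang s → ∀ x q,
    G.transStar s = some x → H.transStar s = some q →
    ∀ σ : E, σ ∉ Sc → H.prob q σ = G.prob x σ

/-- Probabilistic observability (automata form). -/
def AutObservable {X Q E : Type*} [Fintype E] [DecidableEq E] (G : PDES X E)
    (H : PDES Q E) (Sc So : Finset E) : Prop :=
  ∀ s1 s2 : List E, 0 < H.lang s1 → 0 < H.lang s2 → proj So s1 = proj So s2 →
    ∀ x1 q1 x2 q2,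
      G.transStar s1 = some x1 → H.transStar s1 = some q1 →
      G.transStar s2 = some x2 → H.transStar s2 = some q2 →
      ∀ σ ∈ Sc, G.prob x1 σ * H.prob q2 σ = G.prob x2 σ * H.prob q1 σ

/-- Reachability in the controllability-testing automaton `G_tc`.
States are pairs `(x,q)` (as `Sum.inl`) together with the special state `d` (`Sum.inr ()`). -/
inductive TcReach {X Q E : Type*} [Fintype E] (G : PDES X E) (H : PDES Q E)
    (Sc : Finset E) : (X × Q) ⊕ Unit → Prop
  | init : TcReach G H Sc (Sum.inl (G.x0, H.x0))
  | good (x q x' q' σ) : TcReach G H Sc (Sum.inl (x, q)) →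
      G.trans x σ = some x' → H.trans q σ = some q' →
      ((σ ∉ Sc ∧ G.prob x σ = H.prob q σ) ∨ σ ∈ Sc) →
      TcReach G H Sc (Sum.inl (x', q'))
  | bad (x q σ) : TcReach G H Sc (Sum.inl (x, q)) →
      σ ∉ Sc → G.prob x σ ≠ H.prob q σ →
      TcReach G H Sc (Sum.inr ())

/-- Reachability in the observability-testing automaton `G_to`.
States are 4-tuples `(x1,q1,x2,q2)` (as `Sum.inl`) together with the special state `d`. -/
inductive ToReach {X Q E : Type*} [Fintype E] (G : PDES X E) (H : PDES Q E)
    (Sc So : Finset E) : (X × Q × X × Q) ⊕ Unit → Prop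
  | init : ToReach G H Sc So (Sum.inl (G.x0, H.x0, G.x0, H.x0))
  | sync (x1 q1 x2 q2 x1' q1' x2' q2' σ) :
      ToReach G H Sc So (Sum.inl (x1, q1, x2, q2)) →
      G.trans x1 σ = some x1' → H.trans q1 σ = some q1' →
      G.trans x2 σ = some x2' → H.trans q2 σ = some q2' →
      (σ ∉ Sc ∨ (σ ∈ Sc ∧ G.prob x1 σ * H.prob q2 σ = G.prob x2 σ * H.prob q1 σ)) →
      ToReach G H Sc So (Sum.inl (x1', q1', x2', q2'))
  | bad (x1 q1 x2 q2 σ) :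
      ToReach G H Sc So (Sum.inl (x1, q1, x2, q2)) →
      σ ∈ Sc → G.prob x1 σ * H.prob q2 σ ≠ G.prob x2 σ * H.prob q1 σ →
      ToReach G H Sc So (Sum.inr ())
  | left (x1 q1 x2 q2 x1' q1' σ) :
      ToReach G H Sc So (Sum.inl (x1, q1, x2, q2)) → σ ∉ So →
      G.trans x1 σ = some x1' → H.trans q1 σ = some q1' →
      ToReach G H Sc So (Sum.inl (x1', q1', x2, q2))
  | right (x1 q1 x2 q2 x2' q2' σ) :
      ToReach G H Sc So (Sum.inl (x1, q1, x2, q2)) → σ ∉ So →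
      G.trans x2 σ = some x2' → H.trans q2 σ = some q2' →
      ToReach G H Sc So (Sum.inl (x1, q1, x2', q2'))

/-- `H` is a probabilistic subautomaton of `G`, as witnessed by the state inclusion `e`. -/
def SubautomatonVia {Q X E : Type*} [Fintype E] (H : PDES Q E) (G : PDES X E)
    (e : Q → X) : Prop :=
  Function.Injective e ∧ e H.x0 = G.x0 ∧
  ∀ q σ, H.prob q σ ≤ G.prob (e q) σ ∧
    ∀ q', H.trans q σ = some q' → G.trans (e q) σ = some (e q')

/-- The product of two PDESs. -/
def PDES.prod {X Q E : Type*} [Fintype E] (G : PDES X E) (H : PDES Q E) :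
    PDES (X × Q) E where
  x0 := (G.x0, H.x0)
  trans := fun p σ => (G.trans p.1 σ).bind fun x => (H.trans p.2 σ).map fun q => (x, q)
  prob := fun p σ => min (G.prob p.1 σ) (H.prob p.2 σ)
  prob_nonneg := fun p σ => le_min (G.prob_nonneg _ _) (H.prob_nonneg _ _)
  prob_le_one := fun p σ => le_trans (min_le_left _ _) (G.prob_le_one _ _)
  prob_pos_iff := by
    intro p σ
    rw [lt_min_iff, G.prob_pos_iff, H.prob_pos_iff]
    cases hG : G.trans p.1 σ <;> cases hH : H.trans p.2 σ <;> simp [hG, hH]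
  sum_le_one := fun p =>
    le_trans (Finset.sum_le_sum fun σ _ => min_le_left _ _) (G.sum_le_one p.1)

end

section Aux

variable {E : Type*}

lemma chainProd_snoc (w : List E → E → ℝ) (rest : List E) :
    ∀ pre σ, chainProd w pre (rest ++ [σ]) = chainProd w pre rest * w (pre ++ rest) σ := by
  induction rest with
  | nil => intro pre σ; simp [chainProd]
  | cons τ rest ih =>
      intro pre σ
      show w pre τ * chainProd w (pre ++ [τ]) (rest ++ [σ]) = _
      rw [ih (pre ++ [τ]) σ, List.append_assoc, List.singleton_append, ← mul_assoc]
      rfl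

lemma langOf_nil (w : List E → E → ℝ) : langOf w [] = 1 := rfl

lemma langOf_snoc (w : List E → E → ℝ) (s : List E) (σ : E) :
    langOf w (s ++ [σ]) = langOf w s * w s σ := by
  simpa [langOf] using chainProd_snoc w s [] σ

lemma pInter_nil (L1 L2 : List E → ℝ) : pInter L1 L2 [] = 1 := rfl

lemma pInter_snoc (L1 L2 : List E → ℝ) (s : List E) (σ : E) :
    pInter L1 L2 (s ++ [σ]) =
      pInter L1 L2 s * min (L1 (s ++ [σ]) / L1 s) (L2 (s ++ [σ]) / L2 s) :=
  langOf_snoc _ s σ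

variable [Fintype E]

lemma PLang.snoc_le (L : PLang E) (s : List E) (σ : E) : L.toFun (s ++ [σ]) ≤ L.toFun s := by
  calc L.toFun (s ++ [σ]) ≤ ∑ τ : E, L.toFun (s ++ [τ]) :=
        Finset.single_le_sum (fun τ _ => L.nonneg (s ++ [τ])) (Finset.mem_univ σ)
    _ ≤ L.toFun s := L.step s

lemma PLang.pos_prefix (L : PLang E) (s : List E) (σ : E)
    (h : 0 < L.toFun (s ++ [σ])) : 0 < L.toFun s :=
  lt_of_lt_of_le h (L.snoc_le s σ)

lemma ratio_pos {L : PLang E} {s : List E} {σ : E}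
    (h : 0 < L.toFun (s ++ [σ]) / L.toFun s) : 0 < L.toFun (s ++ [σ]) := by
  rcases div_pos_iff.mp h with ⟨h1, _⟩ | ⟨h1, _⟩
  · exact h1
  · exact absurd (L.nonneg _) (not_le.mpr h1)

/-- Support of the intersection is contained in the supports of both factors. -/
lemma pInter_supp (R1 R2 : PLang E) :
    ∀ s, 0 < pInter R1.toFun R2.toFun s → 0 < R1.toFun s ∧ 0 < R2.toFun s := by
  intro s
  induction s using List.reverseRecOn with
  | nil => intro _; rw [R1.eps, R2.eps]; exact ⟨one_pos, one_pos⟩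
  | append_singleton s σ ih =>
      intro h
      rw [pInter_snoc] at h
      have hI : 0 < pInter R1.toFun R2.toFun s := by
        by_contra hns
        push_neg at hns
        have h1 : min (R1.toFun (s ++ [σ]) / R1.toFun s) (R2.toFun (s ++ [σ]) / R2.toFun s) ≥ 0 :=
          le_min (div_nonneg (R1.nonneg _) (R1.nonneg _)) (div_nonneg (R2.nonneg _) (R2.nonneg _))
        nlinarith
      have hmin : 0 < min (R1.toFun (s ++ [σ]) / R1.toFun s)
          (R2.toFun (s ++ [σ]) / R2.toFun s) := by
        by_contra hm
        push_neg at hm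
        nlinarith
      rw [lt_min_iff] at hmin
      exact ⟨ratio_pos hmin.1, ratio_pos hmin.2⟩

lemma pInter_ratio (R1 R2 : PLang E) {s : List E}
    (h : 0 < pInter R1.toFun R2.toFun s) (σ : E) :
    pInter R1.toFun R2.toFun (s ++ [σ]) / pInter R1.toFun R2.toFun s =
      min (R1.toFun (s ++ [σ]) / R1.toFun s) (R2.toFun (s ++ [σ]) / R2.toFun s) := by
  rw [pInter_snoc]
  exact mul_div_cancel_left₀ _ (ne_of_gt h)

end Aux

/-- `PCO(L)` is closed under binary intersection. -/
theorem pco_closed_under_inter {E : Type*} [Fintype E] [DecidableEq E]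
    (L R1 R2 M : PLang E) (Sc So : Finset E)
    (hLR1 : PSub L.toFun R1.toFun) (hR1M : PSub R1.toFun M.toFun)
    (hc1 : ProbControllable R1.toFun M.toFun Sc)
    (ho1 : ProbObservable R1.toFun M.toFun Sc So)
    (hLR2 : PSub L.toFun R2.toFun) (hR2M : PSub R2.toFun M.toFun)
    (hc2 : ProbControllable R2.toFun M.toFun Sc)
    (ho2 : ProbObservable R2.toFun M.toFun Sc So) :
    PSub L.toFun (pInter R1.toFun R2.toFun) ∧
    PSub (pInter R1.toFun R2.toFun) M.toFun ∧
    ProbControllable (pInter R1.toFun R2.toFun) M.toFun Sc ∧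
    ProbObservable (pInter R1.toFun R2.toFun) M.toFun Sc So := by
  set I := pInter R1.toFun R2.toFun with hI
  -- support of L is contained in support of I
  have hsuppLI : ∀ s, 0 < L.toFun s → 0 < I s := by
    intro s
    induction s using List.reverseRecOn with
    | nil => intro _; rw [hI, pInter_nil]; exact one_pos
    | append_singleton s σ ih =>
        intro h
        have hLs : 0 < L.toFun s := L.pos_prefix s σ h
        have hIs : 0 < I s := ih hLs
        have hLr : 0 < L.toFun (s ++ [σ]) / L.toFun s := div_pos h hLs
        have h1 := hLR1.2 s hLs σ
        have h2 := hLR2.2 s hLs σ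
        rw [hI, pInter_snoc]
        exact mul_pos hIs (lt_of_lt_of_le hLr (le_min h1 h2))
  refine ⟨⟨hsuppLI, ?_⟩, ⟨?_, ?_⟩, ?_, ?_⟩
  · -- ratio inequality L ⊆ I
    intro s hLs σ
    have hIs : 0 < I s := hsuppLI s hLs
    rw [hI, pInter_ratio R1 R2 hIs]
    exact le_min (hLR1.2 s hLs σ) (hLR2.2 s hLs σ)
  · -- support I ⊆ support M
    intro s hIs
    exact hR1M.1 s (pInter_supp R1 R2 s hIs).1
  · -- ratio inequality I ⊆ M
    intro s hIs σ
    have hR1s : 0 < R1.toFun s := (pInter_supp R1 R2 s hIs).1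
    rw [hI, pInter_ratio R1 R2 hIs]
    exact le_trans (min_le_left _ _) (hR1M.2 s hR1s σ)
  · -- controllability
    intro s hIs σ hσ
    obtain ⟨hR1s, hR2s⟩ := pInter_supp R1 R2 s hIs
    rw [hI, pInter_ratio R1 R2 hIs, hc1 s hR1s σ hσ, hc2 s hR2s σ hσ, min_self]
  · -- observability
    intro s1 s2 h1 h2 hproj σ hσ
    obtain ⟨hR11, hR21⟩ := pInter_supp R1 R2 s1 h1
    obtain ⟨hR12, hR22⟩ := pInter_supp R1 R2 s2 h2
    rw [hI, pInter_ratio R1 R2 h1, pInter_ratio R1 R2 h2]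
    have hm1 : 0 ≤ M.toFun (s1 ++ [σ]) / M.toFun s1 := div_nonneg (M.nonneg _) (M.nonneg _)
    have hm2 : 0 ≤ M.toFun (s2 ++ [σ]) / M.toFun s2 := div_nonneg (M.nonneg _) (M.nonneg _)
    have e1 := ho1 s1 s2 hR11 hR12 hproj σ hσ
    have e2 := ho2 s1 s2 hR21 hR22 hproj σ hσ
    rw [mul_min_of_nonneg _ _ hm1, mul_min_of_nonneg _ _ hm2, e1, e2]
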